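/- Let 0 < p ≤ 1. Let a_1 ≤ a_2 ≤ a_3 ≤ a_4 be real numbers with mean m = (a_1 + a_2 + a_3 + a_4)/4, and assume a_2 ≤ m ≤ a_3. Then (3/4)^p · ( (a_4 − a_3)^p + (a_3 − a_2)^p + (a_2 − a_1)^p ) ≥ (a_4 − a_3)^p + (a_3 − m)^p. -/

import Mathlib

private lemma my_rpow_add_le (p : ℝ) (hp0 : 0 ≤ p) (hp1 : p ≤ 1) {u v : ℝ}
    (hu : 0 ≤ u) (hv : 0 ≤ v) : (u + v) ^ p ≤ u ^ p + v ^ p := by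
  have h := NNReal.rpow_add_le_add_rpow (⟨u, hu⟩ : NNReal) ⟨v, hv⟩ hp0 hp1
  have h' := NNReal.coe_le_coe.2 h
  exact_mod_cast h'

private lemma my_rpow_concave (p : ℝ) (hp0 : 0 ≤ p) (hp1 : p ≤ 1) {u v a b : ℝ}
    (hu : 0 ≤ u) (hv : 0 ≤ v) (ha : 0 ≤ a) (hb : 0 ≤ b) (hab : a + b = 1) :
    a * u ^ p + b * v ^ p ≤ (a * u + b * v) ^ p := by
  have h := (Real.concaveOn_rpow hp0 hp1).2 (Set.mem_Ici.2 hu) (Set.mem_Ici.2 hv) ha hb hab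
  simpa [smul_eq_mul] using h

/-- `1 + (1/2)^p ≤ 2 * (3/4)^p` for `0 ≤ p ≤ 1`. -/
private lemma scalarC (p : ℝ) (hp0 : 0 ≤ p) (hp1 : p ≤ 1) :
    1 + (1 / 2 : ℝ) ^ p ≤ 2 * (3 / 4 : ℝ) ^ p := by
  have h := my_rpow_concave p hp0 hp1 (u := (1/2 : ℝ)) (v := 1) (a := (1/2 : ℝ)) (b := (1/2 : ℝ))
    (by norm_num) (by norm_num) (by norm_num) (by norm_num) (by norm_num)
  rw [Real.one_rpow] at h
  have e : (1/2 : ℝ) * (1/2) + (1/2) * 1 = 3/4 := by norm_num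
  rw [e] at h
  linarith

/-- `2^p + (1/4)^p ≤ (3/2)^p + (3/4)^p` for `0 ≤ p ≤ 1`. -/
private lemma scalarA (p : ℝ) (hp0 : 0 ≤ p) (hp1 : p ≤ 1) :
    (2 : ℝ) ^ p + (1 / 4 : ℝ) ^ p ≤ (3 / 2 : ℝ) ^ p + (3 / 4 : ℝ) ^ p := by
  have h1 := my_rpow_concave p hp0 hp1 (u := (1/6 : ℝ)) (v := (4/3 : ℝ)) (a := (5/7 : ℝ))
    (b := (2/7 : ℝ)) (by norm_num) (by norm_num) (by norm_num) (by norm_num) (by norm_num)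
  have h2 := my_rpow_concave p hp0 hp1 (u := (1/6 : ℝ)) (v := (4/3 : ℝ)) (a := (2/7 : ℝ))
    (b := (5/7 : ℝ)) (by norm_num) (by norm_num) (by norm_num) (by norm_num) (by norm_num)
  have e1 : (5/7 : ℝ) * (1/6) + (2/7) * (4/3) = 1/2 := by norm_num
  have e2 : (2/7 : ℝ) * (1/6) + (5/7) * (4/3) = 1 := by norm_num
  rw [e1] at h1
  rw [e2, Real.one_rpow] at h2
  -- (1/6)^p + (4/3)^p ≤ (1/2)^p + 1
  have hsum : (1/6 : ℝ) ^ p + (4/3 : ℝ) ^ p ≤ (1/2 : ℝ) ^ p + 1 := by linarith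
  have h32 : (0 : ℝ) ≤ (3/2 : ℝ) ^ p := Real.rpow_nonneg (by norm_num) p
  have hmul := mul_le_mul_of_nonneg_left hsum h32
  have m1 : (3/2 : ℝ) ^ p * (1/6 : ℝ) ^ p = (1/4 : ℝ) ^ p := by
    rw [← Real.mul_rpow (by norm_num) (by norm_num)]; norm_num
  have m2 : (3/2 : ℝ) ^ p * (4/3 : ℝ) ^ p = (2 : ℝ) ^ p := by
    rw [← Real.mul_rpow (by norm_num) (by norm_num)]; norm_num
  have m3 : (3/2 : ℝ) ^ p * (1/2 : ℝ) ^ p = (3/4 : ℝ) ^ p := by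
    rw [← Real.mul_rpow (by norm_num) (by norm_num)]; norm_num
  rw [mul_add, mul_add, m1, m2, m3, mul_one] at hmul
  linarith

/-- key inequality for the case `r = 3` of the sharp `p`-variation bound
on `K₄`, `0 < p ≤ 1`. -/
theorem k4_case_r_eq_three_line_inequality (p : ℝ) (hp0 : 0 < p) (hp1 : p ≤ 1)
    (a1 a2 a3 a4 : ℝ) (h12 : a1 ≤ a2) (h23 : a2 ≤ a3) (h34 : a3 ≤ a4)
    (m : ℝ) (hm : m = (a1 + a2 + a3 + a4) / 4) (h2m : a2 ≤ m) (hm3 : m ≤ a3) :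
    (a4 - a3) ^ p + (a3 - m) ^ p ≤
      (3 / 4 : ℝ) ^ p * ((a4 - a3) ^ p + (a3 - a2) ^ p + (a2 - a1) ^ p) := by
  set X := a4 - a3 with hXdef
  set Y := a3 - a2 with hYdef
  set Z := a2 - a1 with hZdef
  set T := a3 - m with hTdef
  have hX : 0 ≤ X := by simp [hXdef]; linarith
  have hY : 0 ≤ Y := by simp [hYdef]; linarith
  have hZ : 0 ≤ Z := by simp [hZdef]; linarith
  have hT : 0 ≤ T := by simp [hTdef]; linarith
  have hTval : 4 * T = 2 * Y + Z - X := by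
    simp only [hTdef, hXdef, hYdef, hZdef, hm]; ring
  set c := (3 / 4 : ℝ) ^ p with hcdef
  have hc1 : c ≤ 1 := Real.rpow_le_one (by norm_num) (by norm_num) hp0.le
  have hC : 1 + (1/2 : ℝ) ^ p ≤ 2 * c := scalarC p hp0.le hp1
  have hq : (1/4 : ℝ) ^ p ≤ (1/2 : ℝ) ^ p :=
    Real.rpow_le_rpow (by norm_num) (by norm_num) hp0.le
  have hXn : 0 ≤ X ^ p := Real.rpow_nonneg hX p
  have hYn : 0 ≤ Y ^ p := Real.rpow_nonneg hY p
  have hZn : 0 ≤ Z ^ p := Real.rpow_nonneg hZ p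
  rcases le_total X Y with hxy | hyx
  · -- Case X ≤ Y
    have hXp : X ^ p ≤ Y ^ p := Real.rpow_le_rpow hX hxy hp0.le
    have hTle : T ≤ Y / 2 + Z / 4 := by linarith
    have hTp : T ^ p ≤ (Y / 2 + Z / 4) ^ p :=
      Real.rpow_le_rpow hT hTle hp0.le
    have hsplit : (Y / 2 + Z / 4) ^ p ≤ (Y / 2) ^ p + (Z / 4) ^ p :=
      my_rpow_add_le p hp0.le hp1 (by linarith) (by linarith)
    have e1 : (Y / 2) ^ p = (1/2 : ℝ) ^ p * Y ^ p := by
      rw [← Real.mul_rpow (by norm_num) hY]; ring_nf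
    have e2 : (Z / 4) ^ p = (1/4 : ℝ) ^ p * Z ^ p := by
      rw [← Real.mul_rpow (by norm_num) hZ]; ring_nf
    have key1 : 0 ≤ (1 - c) * (Y ^ p - X ^ p) := by
      apply mul_nonneg (by linarith) (by linarith)
    have key2 : 0 ≤ (2 * c - 1 - (1/2 : ℝ) ^ p) * Y ^ p := by
      apply mul_nonneg (by linarith) hYn
    have hh : (1/2 : ℝ) ^ p ≤ 1 := Real.rpow_le_one (by norm_num) (by norm_num) hp0.le
    have key3 : 0 ≤ (c - (1/4 : ℝ) ^ p) * Z ^ p := by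
      apply mul_nonneg (by linarith) hZn
    have hTfinal : T ^ p ≤ (1/2 : ℝ) ^ p * Y ^ p + (1/4 : ℝ) ^ p * Z ^ p := by
      rw [← e1, ← e2]; linarith
    linarith [key1, key2, key3, hTfinal]
  · -- Case Y ≤ X
    have hTle : T ≤ Y / 4 + Z / 4 := by linarith
    have hTp : T ^ p ≤ (Y / 4 + Z / 4) ^ p := Real.rpow_le_rpow hT hTle hp0.le
    have hsplit : (Y / 4 + Z / 4) ^ p ≤ (Y / 4) ^ p + (Z / 4) ^ p :=
      my_rpow_add_le p hp0.le hp1 (by linarith) (by linarith)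
    have e1 : (Y / 4) ^ p = (1/4 : ℝ) ^ p * Y ^ p := by
      rw [← Real.mul_rpow (by norm_num) hY]; ring_nf
    have e2 : (Z / 4) ^ p = (1/4 : ℝ) ^ p * Z ^ p := by
      rw [← Real.mul_rpow (by norm_num) hZ]; ring_nf
    have hXle : X ≤ 2 * Y + Z := by linarith
    have hXp : X ^ p ≤ (2 * Y + Z) ^ p := Real.rpow_le_rpow hX hXle hp0.le
    have hXsplit : (2 * Y + Z) ^ p ≤ (2 * Y) ^ p + Z ^ p :=
      my_rpow_add_le p hp0.le hp1 (by linarith) hZ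
    have e3 : (2 * Y) ^ p = (2 : ℝ) ^ p * Y ^ p := Real.mul_rpow (by norm_num) hY
    have hA := scalarA p hp0.le hp1
    have e4 : (3/2 : ℝ) ^ p = (2 : ℝ) ^ p * c := by
      rw [hcdef, ← Real.mul_rpow (by norm_num) (by norm_num)]; norm_num
    rw [e4] at hA
    -- hA : 2^p + (1/4)^p ≤ 2^p * c + c
    have key1 : 0 ≤ (1 - c) * ((2:ℝ) ^ p * Y ^ p + Z ^ p - X ^ p) := by
      apply mul_nonneg (by linarith)
      linarith [hXp, hXsplit, e3.symm.le, e3.le]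
    have key2 : 0 ≤ (c - (1 - c) * (2:ℝ) ^ p - (1/4 : ℝ) ^ p) * Y ^ p := by
      apply mul_nonneg (by linarith) hYn
    have hh : (1/2 : ℝ) ^ p ≤ 1 := Real.rpow_le_one (by norm_num) (by norm_num) hp0.le
    have key3 : 0 ≤ (2 * c - 1 - (1/4 : ℝ) ^ p) * Z ^ p := by
      apply mul_nonneg (by linarith) hZn
    have hTfinal : T ^ p ≤ (1/4 : ℝ) ^ p * Y ^ p + (1/4 : ℝ) ^ p * Z ^ p := by
      rw [← e1, ← e2]; linarith
    linarith [key1, key2, key3, hTfinal]
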